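/- Let d = (d_1,…,d_n) with d_1,…,d_{n−1} ∈ ℤ ∪ {−∞} and d_n ∈ ℤ, and let ρ(d) be the unique minimal element with respect to ≤ of the set M_d = {μ ∈ C : d_i ≤ S_i(μ) for 1 ≤ i ≤ n−1, and d_n = S_n(μ)}. Then ρ(d) ∈ 𝒩; conversely, every ν ∈ 𝒩 is of the form ρ(d) for some such d. -/

import Mathlib

/-- The dominant cone `C = {x ∈ ℝⁿ : x₁ ≥ x₂ ≥ ⋯ ≥ xₙ}`. -/
def domCone (n : ℕ) : Set (EuclideanSpace ℝ (Fin n)) :=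
  {x | ∀ i j : Fin n, i ≤ j → x j ≤ x i}

/-- `S_k(x) = x₁ + ⋯ + x_k`, the sum of the first `k` coordinates. -/
def psum {n : ℕ} (x : Fin n → ℝ) (k : ℕ) : ℝ :=
  ∑ j ∈ Finset.univ.filter (fun j : Fin n => (j : ℕ) < k), x j

/-- The dominance order: `x ≤ y` iff `S_k(x) ≤ S_k(y)` for `k = 1, …, n-1`
and `S_n(x) = S_n(y)`. -/
def dle {n : ℕ} (x y : Fin n → ℝ) : Prop :=
  (∀ k, 1 ≤ k → k < n → psum x k ≤ psum y k) ∧ psum x n = psum y n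

/-- The set `M_d = {μ ∈ C : d_i ≤ S_i(μ) for 1 ≤ i ≤ n-1, d_n = S_n(μ)}`, where the
`d_i` for `1 ≤ i ≤ n-1` are allowed to be `-∞` (the bottom element of `WithBot ℝ`). -/
def Md (n : ℕ) (d : ℕ → WithBot ℝ) : Set (EuclideanSpace ℝ (Fin n)) :=
  {μ | μ ∈ domCone n ∧
       (∀ k, 1 ≤ k → k < n → d k ≤ ((psum μ k : ℝ) : WithBot ℝ)) ∧
       d n = ((psum μ n : ℝ) : WithBot ℝ)}

/-- The set `𝒩` of Newton points for `GL_n`: dominant rational `ν` with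
`S_n(ν) ∈ ℤ` and `S_i(ν) ∈ ℤ` whenever `ν_i > ν_{i+1}` (`1 ≤ i ≤ n-1`). -/
def newtonSet (n : ℕ) : Set (EuclideanSpace ℝ (Fin n)) :=
  {ν | (∀ i j : Fin n, i ≤ j → ν j ≤ ν i) ∧
       (∀ i, ∃ q : ℚ, ν i = (q : ℝ)) ∧
       (∃ m : ℤ, psum ν n = (m : ℝ)) ∧
       (∀ i : ℕ, ∀ h1 : 1 ≤ i, ∀ h2 : i < n,
          ν ⟨i, h2⟩ < ν ⟨i - 1, by omega⟩ → ∃ m : ℤ, psum ν i = (m : ℝ))}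

/-- A tuple `d` with `d_1, …, d_{n-1} ∈ ℤ ∪ {-∞}` and `d_n ∈ ℤ`. -/
def IsIntTuple (n : ℕ) (d : ℕ → WithBot ℝ) : Prop :=
  (∀ k, 1 ≤ k → k ≤ n → d k = ⊥ ∨ ∃ m : ℤ, d k = ((m : ℝ) : WithBot ℝ)) ∧
  (∃ m : ℤ, d n = ((m : ℝ) : WithBot ℝ))

section AuxLemmas

variable {n : ℕ}

lemma psum_zero' (x : Fin n → ℝ) : psum x 0 = 0 := by simp [psum]

lemma psum_succ' (x : Fin n → ℝ) (k : ℕ) (h : k < n) :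
    psum x (k+1) = psum x k + x ⟨k, h⟩ := by
  unfold psum
  rw [show (Finset.univ.filter (fun j : Fin n => (j : ℕ) < k + 1))
      = insert ⟨k, h⟩ (Finset.univ.filter (fun j : Fin n => (j : ℕ) < k)) by
    ext j
    simp only [Finset.mem_insert, Finset.mem_filter, Finset.mem_univ, true_and]
    constructor
    · intro hj
      rcases Nat.lt_succ_iff_lt_or_eq.mp hj with h' | h'
      · exact Or.inr h'
      · exact Or.inl (Fin.ext h')
    · rintro (rfl | hj)
      · simp
      · omega]
  rw [Finset.sum_insert (by simp)]
  ring

/-- strict descent at position i (1 ≤ i < n), between 0-indexed coords i-1 and i -/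
def desc' (x : Fin n → ℝ) (i : ℕ) : Prop :=
  ∃ h1 : 1 ≤ i, ∃ h2 : i < n, x ⟨i, h2⟩ < x ⟨i - 1, by omega⟩

lemma dom_mono {x : Fin n → ℝ} (hx : ∀ i j : Fin n, i ≤ j → x j ≤ x i)
    {p q : ℕ} (hpq : p ≤ q) (hq : q < n) : x ⟨q, hq⟩ ≤ x ⟨p, by omega⟩ :=
  hx ⟨p, by omega⟩ ⟨q, hq⟩ hpq

/-- x is constant on [a, b) if no descent strictly inside (a, b) -/
lemma const_block {x : Fin n → ℝ} (hx : ∀ i j : Fin n, i ≤ j → x j ≤ x i)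
    {a b : ℕ} (hb : b ≤ n) (hnd : ∀ j, a < j → j < b → ¬ desc' x j) :
    ∀ m, (h : a + m < b) → x ⟨a + m, by omega⟩ = x ⟨a, by omega⟩ := by
  intro m
  induction m with
  | zero => intro h; rfl
  | succ m ih =>
    intro h
    have h1 : a + m < b := by omega
    rw [← ih h1]
    have hlt : a + m + 1 < n := by omega
    have hnd' := hnd (a + m + 1) (by omega) (by omega)
    have hnlt : ¬ (x ⟨a + m + 1, hlt⟩ < x ⟨a + m, by omega⟩) := by
      intro hc
      exact hnd' ⟨by omega, by omega, by convert hc using 2; exact Fin.ext (by show a + m + 1 - 1 = a + m; omega)⟩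
    have hle := dom_mono hx (show a + m ≤ a + m + 1 by omega) hlt
    have heq : x ⟨a + m + 1, hlt⟩ = x ⟨a + m, by omega⟩ := le_antisymm hle (by
      by_contra hc
      push_neg at hc
      exact hnlt hc)
    rw [show (⟨a + (m+1), by omega⟩ : Fin n) = ⟨a + m + 1, hlt⟩ by rfl, heq]

/-- linearity of psum on a constant block -/
lemma psum_block {x : Fin n → ℝ} {a b : ℕ} {c : ℝ} (hb : b ≤ n)
    (hc : ∀ j, a ≤ j → (h : j < b) → x ⟨j, by omega⟩ = c) :
    ∀ m, a + m ≤ b → psum x (a + m) = psum x a + m * c := by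
  intro m
  induction m with
  | zero => intro _; simp
  | succ m ih =>
    intro h
    have h1 : a + m ≤ b := by omega
    have hlt : a + m < n := by omega
    rw [show a + (m+1) = (a+m)+1 by omega, psum_succ' x (a+m) hlt, ih h1,
      hc (a+m) (by omega) (by omega)]
    push_cast
    ring

lemma psum_add_ge {x : Fin n → ℝ} {a M : ℕ} {t : ℝ} (hb : a + M ≤ n)
    (h : ∀ j, a ≤ j → (hj : j < a + M) → t ≤ x ⟨j, by omega⟩) :
    ∀ m, m ≤ M → psum x a + m * t ≤ psum x (a + m) := by
  intro m
  induction m with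
  | zero => intro _; simp
  | succ m ih =>
    intro hm
    have hlt : a + m < n := by omega
    rw [show a + (m+1) = (a+m)+1 by omega, psum_succ' x (a+m) hlt]
    have := h (a+m) (by omega) (by omega)
    have := ih (by omega)
    push_cast
    linarith

lemma psum_add_le {x : Fin n → ℝ} {a M : ℕ} {t : ℝ} (hb : a + M ≤ n)
    (h : ∀ j, a ≤ j → (hj : j < a + M) → x ⟨j, by omega⟩ ≤ t) :
    ∀ m, m ≤ M → psum x (a + m) ≤ psum x a + m * t := by
  intro m
  induction m with
  | zero => intro _; simp
  | succ m ih =>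
    intro hm
    have hlt : a + m < n := by omega
    rw [show a + (m+1) = (a+m)+1 by omega, psum_succ' x (a+m) hlt]
    have := h (a+m) (by omega) (by omega)
    have := ih (by omega)
    push_cast
    linarith

/-- surrounding block boundaries: a ≤ k < b, a and b boundaries, no descent in (a,b) -/
lemma pick_block (x : Fin n → ℝ) (k : ℕ) (hk : k < n) :
    ∃ a b : ℕ, a ≤ k ∧ k < b ∧ b ≤ n ∧
      (a = 0 ∨ desc' x a) ∧ (b = n ∨ desc' x b) ∧
      (∀ j, a < j → j < b → ¬ desc' x j) := by
  classical
  set P : ℕ → Prop := fun j => j = 0 ∨ desc' x j with hP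
  have h0 : P 0 := Or.inl rfl
  set a := Nat.findGreatest P k with ha
  have haP : P a := Nat.findGreatest_spec (Nat.zero_le k) h0
  have hak : a ≤ k := Nat.findGreatest_le k
  have hamax : ∀ j, a < j → j ≤ k → ¬ P j := fun j h1 h2 =>
    Nat.findGreatest_is_greatest h1 h2
  set Q : ℕ → Prop := fun j => k < j ∧ j ≤ n ∧ (j = n ∨ desc' x j)
  have hQn : Q n := ⟨hk, le_refl n, Or.inl rfl⟩
  have hQex : ∃ j, Q j := ⟨n, hQn⟩
  set b := Nat.find hQex with hb
  obtain ⟨hkb, hbn, hbd⟩ : Q b := Nat.find_spec hQex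
  refine ⟨a, b, hak, hkb, hbn, haP.imp id id, hbd, ?_⟩
  intro j h1 h2 hd
  rcases le_or_gt j k with hj | hj
  · exact hamax j h1 hj (Or.inr hd)
  · have hjn : j < n := lt_of_lt_of_le h2 hbn
    exact Nat.find_min hQex h2 ⟨hj, by omega, Or.inr hd⟩

/-- key: if partial sums of dominant x are ≤ those of dominant y at all descents of x,
and at n, then at all k ≤ n -/
lemma key_lemma {x y : Fin n → ℝ}
    (hx : ∀ i j : Fin n, i ≤ j → x j ≤ x i) (hy : ∀ i j : Fin n, i ≤ j → y j ≤ y i)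
    (hd : ∀ j, desc' x j → psum x j ≤ psum y j) (hn : psum x n ≤ psum y n) :
    ∀ k ≤ n, psum x k ≤ psum y k := by
  intro k hkn
  rcases eq_or_lt_of_le hkn with rfl | hk
  · exact hn
  rcases Nat.eq_zero_or_pos k with rfl | hk1
  · simp [psum_zero']
  obtain ⟨a, b, hak, hkb, hbn, haB, hbB, hnd⟩ := pick_block x k hk
  set c := x ⟨a, by omega⟩ with hc
  have hconst : ∀ j, a ≤ j → (h : j < b) → x ⟨j, by omega⟩ = c := by
    intro j hj h
    have := const_block hx hbn hnd (j - a) (by omega)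
    convert this using 3
    omega
  have hxk : psum x k = psum x a + (k - a : ℕ) * c := by
    have := psum_block hbn hconst (k - a) (by omega)
    rwa [show a + (k - a) = k by omega] at this
  have hxb : psum x b = psum x a + (b - a : ℕ) * c := by
    have := psum_block hbn hconst (b - a) (by omega)
    rwa [show a + (b - a) = b by omega] at this
  have hSa : psum x a ≤ psum y a := by
    rcases haB with rfl | hd'
    · simp [psum_zero']
    · exact hd a hd'
  have hSb : psum x b ≤ psum y b := by
    rcases hbB with rfl | hd'
    · exact hn
    · exact hd b hd'
  set t := y ⟨k - 1, by omega⟩ with ht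
  have hyk1 : psum y a + (k - a : ℕ) * t ≤ psum y k := by
    have := psum_add_ge (x := y) (a := a) (M := k - a) (t := t) (by omega)
      (fun j hj hjlt => dom_mono hy (by omega) (by omega)) (k - a) (le_refl _)
    rwa [show a + (k - a) = k by omega] at this
  have hyk2 : psum y b ≤ psum y k + (b - k : ℕ) * t := by
    have := psum_add_le (x := y) (a := k) (M := b - k) (t := t) (by omega)
      (fun j hj hjlt => dom_mono hy (by omega) (by omega)) (b - k) (le_refl _)
    rwa [show k + (b - k) = b by omega] at this
  have h1 : (0:ℝ) < ((b - k : ℕ) : ℝ) := by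
    have : 0 < b - k := by omega
    exact_mod_cast this
  have h2 : (0:ℝ) ≤ ((k - a : ℕ) : ℝ) := by positivity
  have h3 : ((b - a : ℕ) : ℝ) = ((k - a : ℕ) : ℝ) + ((b - k : ℕ) : ℝ) := by
    push_cast [show b - a = (k - a) + (b - k) by omega]; ring
  rw [hxk]
  have hpos : (0:ℝ) < ((k - a : ℕ) : ℝ) + ((b - k : ℕ) : ℝ) := by linarith
  have step : (((k - a : ℕ) : ℝ) + ((b - k : ℕ) : ℝ)) * (psum x a + ((k - a : ℕ) : ℝ) * c)
      ≤ (((k - a : ℕ) : ℝ) + ((b - k : ℕ) : ℝ)) * psum y k := by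
    have hXb' : psum x b = psum x a + (((k - a : ℕ) : ℝ) + ((b - k : ℕ) : ℝ)) * c := by
      rw [hxb, h3]
    calc (((k - a : ℕ) : ℝ) + ((b - k : ℕ) : ℝ)) * (psum x a + ((k - a : ℕ) : ℝ) * c)
        = ((b - k : ℕ) : ℝ) * psum x a + ((k - a : ℕ) : ℝ) * psum x b := by
          rw [hXb']; ring
      _ ≤ ((b - k : ℕ) : ℝ) * psum y a + ((k - a : ℕ) : ℝ) * psum y b :=
          add_le_add (mul_le_mul_of_nonneg_left hSa (le_of_lt h1))
            (mul_le_mul_of_nonneg_left hSb h2)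
      _ ≤ (((k - a : ℕ) : ℝ) + ((b - k : ℕ) : ℝ)) * psum y k := by
          nlinarith [mul_le_mul_of_nonneg_left hyk1 (le_of_lt h1),
            mul_le_mul_of_nonneg_left hyk2 h2]
  exact le_of_mul_le_mul_left step hpos

lemma psum_single {p : ℕ} (hp : p < n) (v : ℝ) (k : ℕ) :
    psum (fun j : Fin n => if (j : ℕ) = p then v else 0) k = if p < k then v else 0 := by
  unfold psum
  rw [show (fun j : Fin n => if (j : ℕ) = p then v else 0)
      = (fun j : Fin n => if j = ⟨p, hp⟩ then v else 0) by
    funext j; simp [Fin.ext_iff]]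
  rw [Finset.sum_ite_eq' _ (⟨p, hp⟩ : Fin n) (fun _ => v)]
  simp

lemma psum_add (x y : Fin n → ℝ) (k : ℕ) :
    psum (fun j => x j + y j) k = psum x k + psum y k := by
  unfold psum; rw [Finset.sum_add_distrib]

/-- the perturbed vector: shift ε from coordinate i-1 to coordinate i -/
lemma perturb (ρ : Fin n → ℝ) (i : ℕ) (h1 : 1 ≤ i) (h2 : i < n) (ε : ℝ)
    (hdom : ∀ p q : Fin n, p ≤ q → ρ q ≤ ρ p) (hε : 0 < ε)
    (hε2 : 2 * ε ≤ ρ ⟨i - 1, by omega⟩ - ρ ⟨i, h2⟩) :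
    ∃ μ : Fin n → ℝ, (∀ p q : Fin n, p ≤ q → μ q ≤ μ p) ∧
      (∀ k, k ≠ i → psum μ k = psum ρ k) ∧ psum μ i = psum ρ i - ε := by
  set e : Fin n → ℝ := fun j =>
    (if (j : ℕ) = i - 1 then -ε else 0) + (if (j : ℕ) = i then ε else 0) with he
  refine ⟨fun j => ρ j + e j, ?_, ?_, ?_⟩
  · intro p q hpq
    rcases eq_or_lt_of_le hpq with rfl | hlt
    · exact le_rfl
    show ρ q + e q ≤ ρ p + e p
    have hne : ¬(i - 1 = i) := by omega
    have hne' : ¬(i = i - 1) := by omega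
    have hPQ : (p : ℕ) < (q : ℕ) := hlt
    have hρ : ρ q ≤ ρ p := hdom p q hpq
    simp only [he]
    by_cases hq1 : (q : ℕ) = i - 1
    · have hp1 : ¬ (p : ℕ) = i - 1 := by omega
      have hp2 : ¬ (p : ℕ) = i := by omega
      have hq2 : ¬ (q : ℕ) = i := by omega
      simp only [hq1, if_true, if_neg hne, if_neg hp1, if_neg hp2, eq_self_iff_true]
      linarith
    by_cases hq2 : (q : ℕ) = i
    · by_cases hp1 : (p : ℕ) = i - 1
      · have hpe : p = ⟨i - 1, by omega⟩ := Fin.ext hp1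
        have hqe : q = ⟨i, h2⟩ := Fin.ext hq2
        have hp2 : ¬ (p : ℕ) = i := by omega
        simp only [hq2, hp1, if_true, if_neg hne, if_neg hne', eq_self_iff_true]
        rw [hpe, hqe]
        linarith
      · have hp2 : ¬ (p : ℕ) = i := by omega
        have hpi : (p : ℕ) < i - 1 := by omega
        have hqe : q = ⟨i, h2⟩ := Fin.ext hq2
        have hd1 : ρ ⟨i - 1, by omega⟩ ≤ ρ ⟨(p : ℕ), p.isLt⟩ :=
          dom_mono hdom (by omega) (by omega)
        simp only [hq2, if_true, if_neg hne', if_neg hp1, if_neg hp2, eq_self_iff_true]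
        rw [hqe]
        have hpp : ρ ⟨(p : ℕ), p.isLt⟩ = ρ p := by congr
        rw [hpp] at hd1
        linarith
    · simp only [if_neg hq1, if_neg hq2]
      by_cases hp1 : (p : ℕ) = i - 1
      · have hqi : i < (q : ℕ) := by omega
        have hp2 : ¬ (p : ℕ) = i := by omega
        have hpe : p = ⟨i - 1, by omega⟩ := Fin.ext hp1
        have hd1 : ρ ⟨(q : ℕ), q.isLt⟩ ≤ ρ ⟨i, h2⟩ := dom_mono hdom (by omega) q.isLt
        have hqq : ρ ⟨(q : ℕ), q.isLt⟩ = ρ q := by congr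
        rw [hqq] at hd1
        simp only [hp1, if_true, if_neg hne, eq_self_iff_true]
        rw [hpe]
        linarith
      · by_cases hp2 : (p : ℕ) = i
        · simp only [if_neg hp1, hp2, if_true, if_neg hne', eq_self_iff_true]
          linarith
        · simp only [if_neg hp1, if_neg hp2]
          linarith
  · intro k hk
    have hsplit : (fun j : Fin n => ρ j + e j) = fun j => ρ j +
        ((fun j : Fin n => if (j : ℕ) = i - 1 then -ε else 0) j +
         (fun j : Fin n => if (j : ℕ) = i then ε else 0) j) := rfl
    rw [hsplit, psum_add, psum_add, psum_single (by omega : i - 1 < n),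
      psum_single h2]
    rcases lt_or_ge k i with hki | hki
    · rw [if_neg (by omega), if_neg (by omega)]; ring
    · rw [if_pos (by omega), if_pos (by omega)]; ring
  · have hsplit : (fun j : Fin n => ρ j + e j) = fun j => ρ j +
        ((fun j : Fin n => if (j : ℕ) = i - 1 then -ε else 0) j +
         (fun j : Fin n => if (j : ℕ) = i then ε else 0) j) := rfl
    rw [hsplit, psum_add, psum_add, psum_single (by omega : i - 1 < n),
      psum_single h2, if_pos (by omega), if_neg (by omega)]
    ring

/-- rationality of coordinates from integrality of partial sums at descents -/
lemma block_rat (ρ : Fin n → ℝ) (hdom : ∀ i j : Fin n, i ≤ j → ρ j ≤ ρ i)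
    (hint : ∀ j, desc' ρ j → ∃ m : ℤ, psum ρ j = (m : ℝ))
    (hN : ∃ m : ℤ, psum ρ n = (m : ℝ)) :
    ∀ k : Fin n, ∃ q : ℚ, ρ k = (q : ℝ) := by
  intro k
  obtain ⟨a, b, hak, hkb, hbn, haB, hbB, hnd⟩ := pick_block ρ (k : ℕ) k.isLt
  set c := ρ ⟨a, by omega⟩ with hc
  have hconst : ∀ j, a ≤ j → (h : j < b) → ρ ⟨j, by omega⟩ = c := by
    intro j hj h
    have := const_block hdom hbn hnd (j - a) (by omega)
    convert this using 3
    omega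
  have hk : ρ k = c := by
    have := hconst (k : ℕ) hak hkb
    rwa [show (⟨(k : ℕ), by omega⟩ : Fin n) = k by rfl] at this
  have hlin : psum ρ b = psum ρ a + ((b - a : ℕ) : ℝ) * c := by
    have := psum_block hbn hconst (b - a) (by omega)
    rwa [show a + (b - a) = b by omega] at this
  obtain ⟨ma, hma⟩ : ∃ m : ℤ, psum ρ a = (m : ℝ) := by
    rcases haB with rfl | hd
    · exact ⟨0, by simp [psum_zero']⟩
    · exact hint a hd
  obtain ⟨mb, hmb⟩ : ∃ m : ℤ, psum ρ b = (m : ℝ) := by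
    rcases hbB with rfl | hd
    · exact hN
    · exact hint b hd
  refine ⟨(mb - ma : ℚ) / ((b : ℚ) - (a : ℚ)), ?_⟩
  have hba : ((b : ℝ) - (a : ℝ)) ≠ 0 := by
    have : (a : ℝ) < (b : ℝ) := by exact_mod_cast (by omega : a < b)
    linarith
  have hcast : ((b - a : ℕ) : ℝ) = (b : ℝ) - (a : ℝ) := by
    push_cast [Nat.cast_sub (by omega : a ≤ b)]; ring
  rw [hk]
  push_cast
  rw [eq_div_iff hba]
  rw [hma, hmb, hcast] at hlin
  linarith

end AuxLemmas

/-- Proposition 1.2(1) for `GL_n`: for integral (possibly `-∞`) `d`, the minimal element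
`ρ(d)` of `M_d` lies in `𝒩`, and conversely every `ν ∈ 𝒩` arises as such a `ρ(d)`. -/
theorem stmt_8 (n : ℕ) (hn : 1 ≤ n) :
    (∀ d : ℕ → WithBot ℝ, IsIntTuple n d →
      ∀ ρ ∈ Md n d, (∀ μ ∈ Md n d, dle ρ μ) → ρ ∈ newtonSet n) ∧
    (∀ ν ∈ newtonSet n, ∃ d : ℕ → WithBot ℝ, IsIntTuple n d ∧
      ν ∈ Md n d ∧ ∀ μ ∈ Md n d, dle ν μ) := by
  constructor
  · -- Part 1
    intro d hd ρ hρ hmin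
    obtain ⟨hdom, hcons, hlast⟩ := hρ
    obtain ⟨hd1, M, hM⟩ := hd
    have hSn : ∃ m : ℤ, psum ρ n = (m : ℝ) := by
      refine ⟨M, ?_⟩
      rw [hM] at hlast
      exact (WithBot.coe_inj.mp hlast).symm
    have hdesc : ∀ i, desc' ρ i → ∃ m : ℤ, psum ρ i = (m : ℝ) := by
      intro i hdi
      obtain ⟨h1, h2, hlt⟩ := hdi
      by_contra hno
      push_neg at hno
      have hδ : 0 < (ρ ⟨i - 1, by omega⟩ - ρ ⟨i, h2⟩) / 2 := by linarith
      obtain ⟨ε, hε, hε2, hεd⟩ : ∃ ε : ℝ, 0 < ε ∧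
          2 * ε ≤ ρ ⟨i - 1, by omega⟩ - ρ ⟨i, h2⟩ ∧
          d i ≤ ((psum ρ i - ε : ℝ) : WithBot ℝ) := by
        rcases hd1 i h1 (le_of_lt h2) with hbot | ⟨m, hm⟩
        · exact ⟨(ρ ⟨i - 1, by omega⟩ - ρ ⟨i, h2⟩) / 2, hδ, by linarith,
            by rw [hbot]; exact bot_le⟩
        · have hml : (m : ℝ) ≤ psum ρ i := by
            have hc := hcons i h1 h2
            rw [hm] at hc
            exact_mod_cast hc
          have hmlt : (m : ℝ) < psum ρ i :=
            lt_of_le_of_ne hml (fun h => hno m h.symm)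
          refine ⟨min ((ρ ⟨i - 1, by omega⟩ - ρ ⟨i, h2⟩) / 2) (psum ρ i - m),
            lt_min hδ (by linarith), ?_, ?_⟩
          · have := min_le_left ((ρ ⟨i - 1, by omega⟩ - ρ ⟨i, h2⟩) / 2) (psum ρ i - m)
            linarith
          · rw [hm]
            refine WithBot.coe_le_coe.mpr ?_
            have := min_le_right ((ρ ⟨i - 1, by omega⟩ - ρ ⟨i, h2⟩) / 2) (psum ρ i - m)
            linarith
      obtain ⟨μ, hμdom, hμeq, hμi⟩ := perturb ρ i h1 h2 ε hdom hε hε2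
      have hμMd : (WithLp.toLp 2 μ : EuclideanSpace ℝ (Fin n)) ∈ Md n d := by
        refine ⟨hμdom, ?_, ?_⟩
        · intro k hk1 hk2
          by_cases hki : k = i
          · subst hki
            rw [show psum (WithLp.toLp 2 μ : EuclideanSpace ℝ (Fin n)) k = psum μ k from rfl, hμi]
            exact hεd
          · rw [show psum (WithLp.toLp 2 μ : EuclideanSpace ℝ (Fin n)) k = psum μ k from rfl,
              hμeq k hki]
            exact hcons k hk1 hk2
        · rw [show psum (WithLp.toLp 2 μ : EuclideanSpace ℝ (Fin n)) n = psum μ n from rfl,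
            hμeq n (by omega)]
          exact hlast
      have hcontra := (hmin (WithLp.toLp 2 μ) hμMd).1 i h1 h2
      rw [show psum (WithLp.toLp 2 μ : EuclideanSpace ℝ (Fin n)) i = psum μ i from rfl, hμi] at hcontra
      linarith
    exact ⟨hdom, block_rat ρ hdom hdesc hSn, hSn,
      fun i h1 h2 hlt => hdesc i ⟨h1, h2, hlt⟩⟩
  · -- Part 2
    intro ν hν
    obtain ⟨hdom, hrat, hSn, hdesc⟩ := hν
    classical
    refine ⟨fun k => if k = n then ((psum ν n : ℝ) : WithBot ℝ)
      else if desc' ν k then ((psum ν k : ℝ) : WithBot ℝ) else ⊥, ⟨?_, ?_⟩, ⟨hdom, ?_, ?_⟩, ?_⟩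
    · -- IsIntTuple first part
      intro k hk1 hk2
      by_cases hkn : k = n
      · subst hkn
        right
        obtain ⟨m, hm⟩ := hSn
        exact ⟨m, by beta_reduce; rw [if_pos rfl, hm]⟩
      · beta_reduce
        rw [if_neg hkn]
        by_cases hdk : desc' ν k
        · right
          obtain ⟨h1, h2, hlt⟩ := id hdk
          obtain ⟨m, hm⟩ := hdesc k h1 h2 hlt
          exact ⟨m, by beta_reduce; rw [if_pos hdk, hm]⟩
        · exact Or.inl (if_neg hdk)
    · -- d n integral
      obtain ⟨m, hm⟩ := hSn
      exact ⟨m, by beta_reduce; rw [if_pos rfl, hm]⟩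
    · -- constraints: d k ≤ psum ν k
      intro k hk1 hk2
      beta_reduce
      rw [if_neg (by omega : ¬ k = n)]
      by_cases hdk : desc' ν k
      · rw [if_pos hdk]
      · rw [if_neg hdk]
        exact bot_le
    · -- d n = psum ν n
      beta_reduce
      rw [if_pos rfl]
    · -- minimality
      intro μ hμ
      obtain ⟨hdomμ, hconsμ, hlastμ⟩ := hμ
      dsimp only at hconsμ hlastμ
      rw [if_pos rfl] at hlastμ
      have hn_eq : psum ν n = psum μ n := WithBot.coe_inj.mp hlastμ
      have hdle : ∀ j, desc' ν j → psum ν j ≤ psum μ j := by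
        intro j hdj
        obtain ⟨h1, h2, hlt⟩ := id hdj
        have hc := hconsμ j h1 h2
        rw [if_neg (by omega : ¬ j = n), if_pos hdj] at hc
        exact_mod_cast hc
      exact ⟨fun k hk1 hk2 => key_lemma hdom hdomμ hdle (le_of_eq hn_eq) k (le_of_lt hk2),
        hn_eq⟩
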